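/- For k=2, f(−q⁴,−q) = (q;q)_∞ · ∑_{l=0}^∞ q^{l²+l}/(q;q)_l (the first Rogers–Ramanujan-type specialization). -/

import Mathlib

noncomputable def qPoch (q : ℝ) (n : ℕ) : ℝ := ∏ j ∈ Finset.range n, (1 - q ^ (j + 1))

noncomputable def gb (q : ℝ) (n k : ℕ) : ℝ :=
  if k ≤ n then qPoch q n / (qPoch q k * qPoch q (n - k)) else 0

lemma qPoch_succ (q : ℝ) (n : ℕ) : qPoch q (n + 1) = qPoch q n * (1 - q ^ (n + 1)) := by
  simp [qPoch, Finset.prod_range_succ]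

lemma qPoch_zero (q : ℝ) : qPoch q 0 = 1 := by simp [qPoch]

lemma one_sub_pow_ne (q : ℝ) (hq : |q| < 1) (m : ℕ) : 1 - q ^ (m+1) ≠ 0 := by
  have h : |q ^ (m+1)| < 1 := by
    rw [abs_pow]
    calc |q| ^ (m+1) ≤ |q| ^ 1 := by
          apply pow_le_pow_of_le_one (abs_nonneg q) hq.le; omega
      _ < 1 := by simpa using hq
  intro h0
  have : q ^ (m+1) = 1 := by linarith
  rw [this] at h; norm_num at h

lemma qPoch_ne (q : ℝ) (hq : |q| < 1) (n : ℕ) : qPoch q n ≠ 0 := by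
  induction n with
  | zero => simp [qPoch]
  | succ m ih => rw [qPoch_succ]; exact mul_ne_zero ih (one_sub_pow_ne q hq m)

lemma gb_zero (q : ℝ) (hq : |q| < 1) (n : ℕ) : gb q n 0 = 1 := by
  simp [gb, qPoch_zero, div_self (qPoch_ne q hq n)]

lemma gb_diag (q : ℝ) (hq : |q| < 1) (n : ℕ) : gb q n n = 1 := by
  simp [gb, qPoch_zero, div_self (qPoch_ne q hq n)]

lemma gb_of_gt (q : ℝ) {n k : ℕ} (h : n < k) : gb q n k = 0 := by
  simp [gb, Nat.not_le.mpr h]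

lemma pascal1 (q : ℝ) (hq : |q| < 1) (n k : ℕ) :
    gb q (n+1) (k+1) = gb q n (k+1) + q ^ (n - k) * gb q n k := by
  rcases Nat.lt_or_ge n (k+1) with h | h
  · rcases Nat.lt_or_ge n k with h2 | h2
    · rw [gb_of_gt q (by omega), gb_of_gt q h2, gb_of_gt q (by omega)]; ring
    · have hk : k = n := by omega
      subst hk
      rw [gb_diag q hq, gb_of_gt q (Nat.lt_succ_self k), gb_diag q hq]
      simp
  · -- main case k+1 ≤ n
    obtain ⟨m, rfl⟩ := Nat.exists_eq_add_of_le h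
    have e1 : gb q (k+1+m+1) (k+1) = qPoch q (k+1+m+1) / (qPoch q (k+1) * qPoch q (m+1)) := by
      rw [gb, if_pos (by omega), show k+1+m+1 - (k+1) = m+1 from by omega]
    have e2 : gb q (k+1+m) (k+1) = qPoch q (k+1+m) / (qPoch q (k+1) * qPoch q m) := by
      rw [gb, if_pos (by omega), show k+1+m - (k+1) = m from by omega]
    have e3 : gb q (k+1+m) k = qPoch q (k+1+m) / (qPoch q k * qPoch q (m+1)) := by
      rw [gb, if_pos (by omega), show k+1+m - k = m+1 from by omega]
    rw [e1, e2, e3]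
    have hsub : k+1+m - k = m + 1 := by omega
    rw [hsub]
    have hP1 : qPoch q (k+1+m+1) = qPoch q (k+1+m) * (1 - q ^ (m+1) * q ^ (k+1)) := by
      rw [qPoch_succ]; congr 2; rw [← pow_add]; congr 1; omega
    rw [hP1, qPoch_succ q m, qPoch_succ q k]
    have A := qPoch_ne q hq k
    have B := qPoch_ne q hq m
    have C := qPoch_ne q hq (k+1+m)
    have D1 := one_sub_pow_ne q hq k
    have D2 := one_sub_pow_ne q hq m
    field_simp
    ring

lemma pascal2 (q : ℝ) (hq : |q| < 1) (n k : ℕ) :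
    gb q (n+1) (k+1) = q ^ (k+1) * gb q n (k+1) + gb q n k := by
  rcases Nat.lt_or_ge n (k+1) with h | h
  · rcases Nat.lt_or_ge n k with h2 | h2
    · rw [gb_of_gt q (by omega), gb_of_gt q h2, gb_of_gt q (by omega)]; ring
    · have hk : k = n := by omega
      subst hk
      rw [gb_diag q hq, gb_of_gt q (Nat.lt_succ_self k), gb_diag q hq]
      simp
  · obtain ⟨m, rfl⟩ := Nat.exists_eq_add_of_le h
    have e1 : gb q (k+1+m+1) (k+1) = qPoch q (k+1+m+1) / (qPoch q (k+1) * qPoch q (m+1)) := by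
      rw [gb, if_pos (by omega), show k+1+m+1 - (k+1) = m+1 from by omega]
    have e2 : gb q (k+1+m) (k+1) = qPoch q (k+1+m) / (qPoch q (k+1) * qPoch q m) := by
      rw [gb, if_pos (by omega), show k+1+m - (k+1) = m from by omega]
    have e3 : gb q (k+1+m) k = qPoch q (k+1+m) / (qPoch q k * qPoch q (m+1)) := by
      rw [gb, if_pos (by omega), show k+1+m - k = m+1 from by omega]
    rw [e1, e2, e3]
    have hP1 : qPoch q (k+1+m+1) = qPoch q (k+1+m) * (1 - q ^ (m+1) * q ^ (k+1)) := by
      rw [qPoch_succ]; congr 2; rw [← pow_add]; congr 1; omega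
    rw [hP1, qPoch_succ q m, qPoch_succ q k]
    have A := qPoch_ne q hq k
    have B := qPoch_ne q hq m
    have C := qPoch_ne q hq (k+1+m)
    have D1 := one_sub_pow_ne q hq k
    have D2 := one_sub_pow_ne q hq m
    field_simp
    ring

noncomputable def RRD (q : ℝ) (n : ℕ) : ℝ :=
  ∑ j ∈ Finset.range (n+1), q ^ (j^2 + j) * gb q (n - j) j

noncomputable def tp (q : ℝ) (n k : ℕ) : ℝ :=
  if 5*k ≤ n then (-1)^k * q^(k*(5*k+3)/2) * gb q (n+1) ((n-5*k)/2) else 0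

noncomputable def tm (q : ℝ) (n j : ℕ) : ℝ :=
  (-1)^(j+1) * q^((j+1)*(5*j+2)/2) * gb q (n+1) ((n+5*j+5)/2)

noncomputable def RRE (q : ℝ) (n : ℕ) : ℝ :=
  (∑ k ∈ Finset.range (n+1), tp q n k) + ∑ j ∈ Finset.range (n+1), tm q n j

lemma tp_eq_zero (q : ℝ) {n k : ℕ} (h : n < 5*k) : tp q n k = 0 := by
  simp [tp, Nat.not_le.mpr h]

lemma tm_eq_zero (q : ℝ) {n j : ℕ} (h : n ≤ 5*j+1) : tm q n j = 0 := by
  have : gb q (n+1) ((n+5*j+5)/2) = 0 := gb_of_gt q (by omega)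
  simp [tm, this]

lemma sum_range_two_mul {M : ℕ} (f : ℕ → ℝ) :
    ∑ i ∈ Finset.range (2*M), f i = ∑ m ∈ Finset.range M, (f (2*m) + f (2*m+1)) := by
  induction M with
  | zero => simp
  | succ m ih =>
      rw [show 2*(m+1) = 2*m+1+1 from by omega, Finset.sum_range_succ, Finset.sum_range_succ,
        ih, Finset.sum_range_succ]
      ring

lemma sum_range_two_mul_add_one {M : ℕ} (f : ℕ → ℝ) :
    ∑ i ∈ Finset.range (2*M+1), f i = f 0 + ∑ m ∈ Finset.range M, (f (2*m+1) + f (2*m+2)) := by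
  induction M with
  | zero => simp
  | succ m ih =>
      rw [show 2*(m+1)+1 = 2*m+1+1+1 from by omega, Finset.sum_range_succ, Finset.sum_range_succ,
        ih, Finset.sum_range_succ]
      ring

-- exponent helpers
lemma two_dvd_eP (k : ℕ) : 2 ∣ k*(5*k+3) := by
  rcases Nat.even_or_odd k with ⟨t, rfl⟩ | ⟨t, rfl⟩
  · exact ⟨t*(5*(t+t)+3), by ring⟩
  · exact ⟨(2*t+1)*(5*t+4), by ring⟩

lemma eP_succ (k : ℕ) : (k+1)*(5*(k+1)+3)/2 = k*(5*k+3)/2 + (5*k+4) := by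
  obtain ⟨x, hx⟩ := two_dvd_eP k
  have h1 : (k+1)*(5*(k+1)+3) = 2*x + 2*(5*k+4) := by rw [← hx]; ring
  omega

lemma two_dvd_eM (j : ℕ) : 2 ∣ (j+1)*(5*j+2) := by
  rcases Nat.even_or_odd j with ⟨t, rfl⟩ | ⟨t, rfl⟩
  · exact ⟨(t+t+1)*(5*t+1), by ring⟩
  · exact ⟨(t+1)*(10*t+7), by ring⟩

lemma eM_succ (j : ℕ) : (j+2)*(5*(j+1)+2)/2 = (j+1)*(5*j+2)/2 + (5*j+6) := by
  obtain ⟨x, hx⟩ := two_dvd_eM j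
  have h1 : (j+2)*(5*(j+1)+2) = 2*x + 2*(5*j+6) := by rw [← hx]; ring
  omega

-- chunk lemmas
lemma chunk1 (q : ℝ) (hq : |q| < 1) (M b : ℕ) :
    gb q (M+2) (b+1) - gb q (M+1) b - q^(M+1) * gb q M b = q^(b+1) * gb q M (b+1) := by
  rw [pascal2 q hq (M+1) b, pascal1 q hq M b]
  rcases le_or_gt b M with hb | hb
  · have : q^(b+1) * q^(M-b) = q^(M+1) := by rw [← pow_add]; congr 1; omega
    linear_combination gb q M b * this
  · rcases Nat.lt_or_ge (M+1) b with h2 | h2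
    · rw [gb_of_gt q hb, gb_of_gt q (by omega)]
      ring
    · have hbm : b = M+1 := by omega
      subst hbm
      rw [gb_of_gt q hb, gb_of_gt q (by omega)]
      ring

lemma chunk2 (q : ℝ) (hq : |q| < 1) (M b : ℕ) :
    gb q (M+2) (b+3) - gb q (M+1) (b+3) - q^(M+1) * gb q M (b+2)
      = q^(M-b-1) * gb q M (b+1) := by
  rw [show gb q (M+2) (b+3) = gb q ((M+1)+1) ((b+2)+1) from rfl,
    pascal1 q hq (M+1) (b+2), pascal2 q hq M (b+1)]
  rcases le_or_gt (b+1) M with hb | hb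
  · have h1 : (M+1) - (b+2) = M - b - 1 := by omega
    have h2 : q^(M-b-1) * q^(b+2) = q^(M+1) := by rw [← pow_add]; congr 1; omega
    rw [h1]
    linear_combination gb q M (b+2) * h2
  · have h1 : (M+1) - (b+2) = M - b - 1 := by omega
    rw [h1, gb_of_gt q (show M < b+2 from by omega), gb_of_gt q (show M < b+1 from by omega)]
    ring

noncomputable def SpT (q : ℝ) (n k : ℕ) : ℝ := tp q (n+2) k - tp q (n+1) k - q^(n+2) * tp q n k
noncomputable def SmT (q : ℝ) (n j : ℕ) : ℝ := tm q (n+2) j - tm q (n+1) j - q^(n+2) * tm q n j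

lemma pairP (q : ℝ) (hq : |q| < 1) (n k : ℕ) (hpar : (n + k) % 2 = 1) :
    SpT q n (k+1) + SpT q n k = 0 := by
  obtain h1 | h1 | h1 | h1 | h1 :
      5*k+5 ≤ n ∨ 5*k+5 = n+2 ∨ 5*k+5 = n+4 ∨ 5*k+5 = n+6 ∨ n+8 ≤ 5*k+5 := by omega
  · -- main case
    obtain ⟨b, hb⟩ : ∃ b, n = 5*k+5+2*b := ⟨(n-(5*k+5))/2, by omega⟩
    have i1 : (n+2-5*(k+1))/2 = b+1 := by omega
    have i2 : (n+1-5*(k+1))/2 = b := by omega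
    have i3 : (n-5*(k+1))/2 = b := by omega
    have i4 : (n+2-5*k)/2 = b+3 := by omega
    have i5 : (n+1-5*k)/2 = b+3 := by omega
    have i6 : (n-5*k)/2 = b+2 := by omega
    rw [SpT, SpT, tp, tp, tp, tp, tp, tp,
      if_pos (by omega : 5*(k+1) ≤ n+2), if_pos (by omega : 5*(k+1) ≤ n+1),
      if_pos (by omega : 5*(k+1) ≤ n), if_pos (by omega : 5*k ≤ n+2),
      if_pos (by omega : 5*k ≤ n+1), if_pos (by omega : 5*k ≤ n),
      i1, i2, i3, i4, i5, i6]
    have hc1 := chunk1 q hq (n+1) b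
    have hc2 := chunk2 q hq (n+1) b
    have hd := eP_succ k
    have hexp : (k+1)*(5*(k+1)+3)/2 + (b+1) = k*(5*k+3)/2 + (n+1-b-1) := by omega
    have hE : q^((k+1)*(5*(k+1)+3)/2) * q^(b+1) = q^(k*(5*k+3)/2) * q^(n+1-b-1) := by
      rw [← pow_add, ← pow_add, hexp]
    have hgb : gb q ((n+1)+2) (b+1) = gb q (n+3) (b+1) := by norm_num
    calc (-1:ℝ)^(k+1) * q^((k+1)*(5*(k+1)+3)/2) * gb q (n+2+1) (b+1)
            - (-1)^(k+1) * q^((k+1)*(5*(k+1)+3)/2) * gb q (n+1+1) b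
            - q^(n+2) * ((-1)^(k+1) * q^((k+1)*(5*(k+1)+3)/2) * gb q (n+1) b)
          + ((-1:ℝ)^k * q^(k*(5*k+3)/2) * gb q (n+2+1) (b+3)
            - (-1)^k * q^(k*(5*k+3)/2) * gb q (n+1+1) (b+3)
            - q^(n+2) * ((-1)^k * q^(k*(5*k+3)/2) * gb q (n+1) (b+2)))
        = (-1:ℝ)^(k+1) * q^((k+1)*(5*(k+1)+3)/2) *
            (gb q ((n+1)+2) (b+1) - gb q ((n+1)+1) b - q^((n+1)+1) * gb q (n+1) b)
          + (-1:ℝ)^k * q^(k*(5*k+3)/2) *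
            (gb q ((n+1)+2) (b+3) - gb q ((n+1)+1) (b+3) - q^((n+1)+1) * gb q (n+1) (b+2)) := by
          ring_nf
      _ = 0 := by
          rw [hc1, hc2]
          linear_combination (-((-1:ℝ)^k * gb q (n+1) (b+1))) * hE
  · -- 5k+5 = n+2
    have i4 : (n+2-5*k)/2 = 2 := by omega
    have i5 : (n+1-5*k)/2 = 2 := by omega
    have i6 : (n-5*k)/2 = 1 := by omega
    have i1 : (n+2-5*(k+1))/2 = 0 := by omega
    rw [SpT, SpT, tp, tp, tp, tp, tp, tp,
      if_pos (by omega : 5*(k+1) ≤ n+2), if_neg (by omega : ¬ 5*(k+1) ≤ n+1),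
      if_neg (by omega : ¬ 5*(k+1) ≤ n), if_pos (by omega : 5*k ≤ n+2),
      if_pos (by omega : 5*k ≤ n+1), if_pos (by omega : 5*k ≤ n),
      i1, i4, i5, i6]
    have hA : gb q (n+2+1) 0 = 1 := gb_zero q hq _
    -- chunk2 with b := -1 done by hand : gb (M+2) 2 - gb (M+1) 2 - q^(M+1) gb M 1 = q^M
    have hB : gb q (n+2+1) 2 - gb q (n+1+1) 2 - q^(n+2) * gb q (n+1) 1 = q^(n+1) := by
      rw [show gb q (n+2+1) 2 = gb q ((n+2)+1) (1+1) from rfl, pascal1 q hq (n+2) 1,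
        show gb q (n+1+1) 1 = gb q ((n+1)+1) (0+1) from rfl, pascal2 q hq (n+1) 0,
        gb_zero q hq, show (n+2)-1 = n+1 from by omega]
      ring
    have hd := eP_succ k
    have hexp : (k+1)*(5*(k+1)+3)/2 = k*(5*k+3)/2 + (n+1) := by omega
    have hE : q^((k+1)*(5*(k+1)+3)/2) = q^(k*(5*k+3)/2) * q^(n+1) := by
      rw [← pow_add, hexp]
    rw [hA]
    calc (-1:ℝ)^(k+1) * q^((k+1)*(5*(k+1)+3)/2) * 1 - 0 - q^(n+2) * 0
          + ((-1:ℝ)^k * q^(k*(5*k+3)/2) * gb q (n+2+1) 2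
            - (-1)^k * q^(k*(5*k+3)/2) * gb q (n+1+1) 2
            - q^(n+2) * ((-1)^k * q^(k*(5*k+3)/2) * gb q (n+1) 1))
        = (-1:ℝ)^(k+1) * q^((k+1)*(5*(k+1)+3)/2)
          + (-1:ℝ)^k * q^(k*(5*k+3)/2) *
            (gb q (n+2+1) 2 - gb q (n+1+1) 2 - q^(n+2) * gb q (n+1) 1) := by ring
      _ = 0 := by rw [hB]; linear_combination (-((-1:ℝ)^k)) * hE
  · -- 5k+5 = n+4
    have i4 : (n+2-5*k)/2 = 1 := by omega
    have i5 : (n+1-5*k)/2 = 1 := by omega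
    have i6 : (n-5*k)/2 = 0 := by omega
    rw [SpT, SpT, tp, tp, tp, tp, tp, tp,
      if_neg (by omega : ¬ 5*(k+1) ≤ n+2), if_neg (by omega : ¬ 5*(k+1) ≤ n+1),
      if_neg (by omega : ¬ 5*(k+1) ≤ n), if_pos (by omega : 5*k ≤ n+2),
      if_pos (by omega : 5*k ≤ n+1), if_pos (by omega : 5*k ≤ n),
      i4, i5, i6]
    have hB : gb q (n+2+1) 1 - gb q (n+1+1) 1 - q^(n+2) * gb q (n+1) 0 = 0 := by
      rw [show gb q (n+2+1) 1 = gb q ((n+2)+1) (0+1) from rfl, pascal1 q hq (n+2) 0,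
        gb_zero q hq, gb_zero q hq, show (n+2)-0 = n+2 from rfl]
      ring
    linear_combination ((-1:ℝ)^k * q^(k*(5*k+3)/2)) * hB
  · -- 5k+5 = n+6
    have i4 : (n+2-5*k)/2 = 0 := by omega
    have i5 : (n+1-5*k)/2 = 0 := by omega
    rw [SpT, SpT, tp, tp, tp, tp, tp, tp,
      if_neg (by omega : ¬ 5*(k+1) ≤ n+2), if_neg (by omega : ¬ 5*(k+1) ≤ n+1),
      if_neg (by omega : ¬ 5*(k+1) ≤ n), if_pos (by omega : 5*k ≤ n+2),
      if_pos (by omega : 5*k ≤ n+1), if_neg (by omega : ¬ 5*k ≤ n),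
      i4, i5]
    rw [gb_zero q hq, gb_zero q hq]
    ring
  · rw [SpT, SpT, tp, tp, tp, tp, tp, tp,
      if_neg (by omega : ¬ 5*(k+1) ≤ n+2), if_neg (by omega : ¬ 5*(k+1) ≤ n+1),
      if_neg (by omega : ¬ 5*(k+1) ≤ n), if_neg (by omega : ¬ 5*k ≤ n+2),
      if_neg (by omega : ¬ 5*k ≤ n+1), if_neg (by omega : ¬ 5*k ≤ n)]
    ring

lemma pairM (q : ℝ) (hq : |q| < 1) (n j : ℕ) (hpar : (n + j) % 2 = 1) :
    SmT q n j + SmT q n (j+1) = 0 := by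
  obtain ⟨a, ha⟩ : ∃ a, n + 5*j + 7 = 2*a := ⟨(n+5*j+7)/2, by omega⟩
  have ha3 : 3 ≤ a := by omega
  obtain ⟨b, hb⟩ : ∃ b, a = b + 1 := ⟨a - 1, by omega⟩
  have i1 : (n+2+5*j+5)/2 = b+1 := by omega
  have i2 : (n+1+5*j+5)/2 = b := by omega
  have i3 : (n+5*j+5)/2 = b := by omega
  have i4 : (n+2+5*(j+1)+5)/2 = b+3 := by omega
  have i5 : (n+1+5*(j+1)+5)/2 = b+3 := by omega
  have i6 : (n+5*(j+1)+5)/2 = b+2 := by omega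
  rw [SmT, SmT, tm, tm, tm, tm, tm, tm, i1, i2, i3, i4, i5, i6]
  have hc1 := chunk1 q hq (n+1) b
  have hc2 := chunk2 q hq (n+1) b
  rcases le_or_gt (b+1) (n+1) with hcase | hcase
  · have hd := eM_succ j
    have hexp : (j+1)*(5*j+2)/2 + (b+1) = (j+2)*(5*(j+1)+2)/2 + (n+1-b-1) := by omega
    have hE : q^((j+1)*(5*j+2)/2) * q^(b+1) = q^((j+2)*(5*(j+1)+2)/2) * q^(n+1-b-1) := by
      rw [← pow_add, ← pow_add, hexp]
    calc ((-1:ℝ)^(j+1) * q^((j+1)*(5*j+2)/2) * gb q (n+2+1) (b+1)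
            - (-1)^(j+1) * q^((j+1)*(5*j+2)/2) * gb q (n+1+1) b
            - q^(n+2) * ((-1)^(j+1) * q^((j+1)*(5*j+2)/2) * gb q (n+1) b))
          + ((-1:ℝ)^(j+1+1) * q^((j+1+1)*(5*(j+1)+2)/2) * gb q (n+2+1) (b+3)
            - (-1)^(j+1+1) * q^((j+1+1)*(5*(j+1)+2)/2) * gb q (n+1+1) (b+3)
            - q^(n+2) * ((-1)^(j+1+1) * q^((j+1+1)*(5*(j+1)+2)/2) * gb q (n+1) (b+2)))
        = (-1:ℝ)^(j+1) * q^((j+1)*(5*j+2)/2) *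
            (gb q ((n+1)+2) (b+1) - gb q ((n+1)+1) b - q^((n+1)+1) * gb q (n+1) b)
          + (-1:ℝ)^(j+1+1) * q^((j+2)*(5*(j+1)+2)/2) *
            (gb q ((n+1)+2) (b+3) - gb q ((n+1)+1) (b+3) - q^((n+1)+1) * gb q (n+1) (b+2)) := by
          ring_nf
      _ = 0 := by
          rw [hc1, hc2]
          linear_combination ((-1:ℝ)^(j+1) * gb q (n+1) (b+1)) * hE
  · -- b ≥ n+1 : gb q (n+1) (b+1) = 0 kills both reduced terms
    have hz : gb q (n+1) (b+1) = 0 := gb_of_gt q (by omega)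
    calc ((-1:ℝ)^(j+1) * q^((j+1)*(5*j+2)/2) * gb q (n+2+1) (b+1)
            - (-1)^(j+1) * q^((j+1)*(5*j+2)/2) * gb q (n+1+1) b
            - q^(n+2) * ((-1)^(j+1) * q^((j+1)*(5*j+2)/2) * gb q (n+1) b))
          + ((-1:ℝ)^(j+1+1) * q^((j+1+1)*(5*(j+1)+2)/2) * gb q (n+2+1) (b+3)
            - (-1)^(j+1+1) * q^((j+1+1)*(5*(j+1)+2)/2) * gb q (n+1+1) (b+3)
            - q^(n+2) * ((-1)^(j+1+1) * q^((j+1+1)*(5*(j+1)+2)/2) * gb q (n+1) (b+2)))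
        = (-1:ℝ)^(j+1) * q^((j+1)*(5*j+2)/2) *
            (gb q ((n+1)+2) (b+1) - gb q ((n+1)+1) b - q^((n+1)+1) * gb q (n+1) b)
          + (-1:ℝ)^(j+1+1) * q^((j+2)*(5*(j+1)+2)/2) *
            (gb q ((n+1)+2) (b+3) - gb q ((n+1)+1) (b+3) - q^((n+1)+1) * gb q (n+1) (b+2)) := by
          ring_nf
      _ = 0 := by rw [hc1, hc2, hz]; ring

lemma pairPM (q : ℝ) (hq : |q| < 1) (n : ℕ) (hpar : n % 2 = 0) :
    SpT q n 0 + SmT q n 0 = 0 := by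
  obtain ⟨c, hc⟩ : ∃ c, n = 2*c := ⟨n/2, by omega⟩
  have i1 : (n+2-5*0)/2 = c+1 := by omega
  have i2 : (n+1-5*0)/2 = c := by omega
  have i3 : (n-5*0)/2 = c := by omega
  have i4 : (n+2+5*0+5)/2 = c+3 := by omega
  have i5 : (n+1+5*0+5)/2 = c+3 := by omega
  have i6 : (n+5*0+5)/2 = c+2 := by omega
  rw [SpT, SmT, tp, tp, tp, tm, tm, tm,
    if_pos (by omega : 5*0 ≤ n+2), if_pos (by omega : 5*0 ≤ n+1), if_pos (by omega : 5*0 ≤ n),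
    i1, i2, i3, i4, i5, i6]
  have hc1 := chunk1 q hq (n+1) c
  have hc2 := chunk2 q hq (n+1) c
  have hE : q^(c+1) = q^(n+1-c-1) * q := by
    rw [← pow_succ]
    congr 1
    omega
  calc ((-1:ℝ)^0 * q^(0*(5*0+3)/2) * gb q (n+2+1) (c+1)
          - (-1)^0 * q^(0*(5*0+3)/2) * gb q (n+1+1) c
          - q^(n+2) * ((-1)^0 * q^(0*(5*0+3)/2) * gb q (n+1) c))
        + ((-1:ℝ)^(0+1) * q^((0+1)*(5*0+2)/2) * gb q (n+2+1) (c+3)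
          - (-1)^(0+1) * q^((0+1)*(5*0+2)/2) * gb q (n+1+1) (c+3)
          - q^(n+2) * ((-1)^(0+1) * q^((0+1)*(5*0+2)/2) * gb q (n+1) (c+2)))
      = (gb q ((n+1)+2) (c+1) - gb q ((n+1)+1) c - q^((n+1)+1) * gb q (n+1) c)
        - q^((0+1)*(5*0+2)/2) *
          (gb q ((n+1)+2) (c+3) - gb q ((n+1)+1) (c+3) - q^((n+1)+1) * gb q (n+1) (c+2)) := by
        ring_nf
    _ = 0 := by
        rw [hc1, hc2]
        linear_combination (gb q (n+1) (c+1)) * hE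

lemma RRD_rec (q : ℝ) (hq : |q| < 1) (n : ℕ) :
    RRD q (n+2) = RRD q (n+1) + q^(n+2) * RRD q n := by
  have hterm : ∀ j ∈ Finset.range (n+3),
      q ^ (j^2 + j) * gb q (n+2-j) j
        = q ^ (j^2 + j) * gb q (n+1-j) j
          + (if j = 0 then 0 else q^(n+2) * (q^((j-1)^2+(j-1)) * gb q (n-(j-1)) (j-1))) := by
    intro j _
    match j with
    | 0 => simp [gb_zero q hq]
    | i+1 =>
      simp only [if_neg (Nat.succ_ne_zero i), Nat.add_sub_cancel]
      rcases le_or_gt (i+1) (n+1) with hi | hi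
      · have h1 : n+2-(i+1) = (n-i)+1 := by omega
        have h2 : n+1-(i+1) = n-i := by omega
        rw [h1, h2, pascal1 q hq (n-i) i]
        rcases le_or_gt (2*i) n with h3 | h3
        · have h4 : (i+1)^2 + (i+1) = i*i + 3*i + 2 := by ring
          have h5 : i^2 + i = i*i + i := by ring
          have h6 : q^((i+1)^2+(i+1)) * q^(n-i-i) = q^(n+2) * q^(i^2+i) := by
            rw [← pow_add, ← pow_add, h4, h5]
            congr 1
            obtain ⟨s, hs⟩ : ∃ s, i*i = s := ⟨i*i, rfl⟩
            rw [hs]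
            omega
          calc q^((i+1)^2+(i+1)) * (gb q (n-i) (i+1) + q^(n-i-i) * gb q (n-i) i)
              = q^((i+1)^2+(i+1)) * gb q (n-i) (i+1)
                + (q^((i+1)^2+(i+1)) * q^(n-i-i)) * gb q (n-i) i := by ring
            _ = q^((i+1)^2+(i+1)) * gb q (n-i) (i+1)
                + q^(n+2) * (q^(i^2+i) * gb q (n-i) i) := by rw [h6]; ring
        · have h4 : gb q (n-i) i = 0 := gb_of_gt q (by omega)
          rw [h4]
          ring
      · have h1 : n+2-(i+1) = n+1-i := by omega
        have h2 : gb q (n+1-(i+1)) (i+1) = 0 := gb_of_gt q (by omega)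
        have h3 : gb q (n-i) i = 0 := gb_of_gt q (by omega)
        have h4 : gb q (n+1-i) (i+1) = 0 := gb_of_gt q (by omega)
        rw [h1, h2, h3, h4]
        ring
  rw [RRD, Finset.sum_congr rfl hterm, Finset.sum_add_distrib]
  congr 1
  · -- ∑ A over range (n+3) = RRD q (n+1)
    rw [show n+3 = (n+2)+1 from rfl, Finset.sum_range_succ]
    have hz : gb q (n+1-(n+2)) (n+2) = 0 := by
      apply gb_of_gt q
      omega
    rw [hz, RRD]
    ring
  · -- ∑ B over range (n+3) = q^(n+2) * RRD q n
    rw [show n+3 = (n+2)+1 from rfl, Finset.sum_range_succ', RRD, Finset.mul_sum]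
    simp only [if_neg (Nat.succ_ne_zero _), Nat.add_sub_cancel]
    rw [show n+2 = (n+1)+1 from rfl, Finset.sum_range_succ]
    have hz : gb q (n-(n+1)) (n+1) = 0 := by
      apply gb_of_gt q
      omega
    rw [hz]
    simp

lemma sum_tp_ext (q : ℝ) (n K : ℕ) (h : n+1 ≤ K) :
    ∑ k ∈ Finset.range K, tp q n k = ∑ k ∈ Finset.range (n+1), tp q n k := by
  refine (Finset.sum_subset (Finset.range_subset_range.mpr h) ?_).symm
  intro x hx hxn
  simp only [Finset.mem_range] at hx hxn
  exact tp_eq_zero q (by omega)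

lemma sum_tm_ext (q : ℝ) (n K : ℕ) (h : n+1 ≤ K) :
    ∑ j ∈ Finset.range K, tm q n j = ∑ j ∈ Finset.range (n+1), tm q n j := by
  refine (Finset.sum_subset (Finset.range_subset_range.mpr h) ?_).symm
  intro x hx hxn
  simp only [Finset.mem_range] at hx hxn
  exact tm_eq_zero q (by omega)

lemma RRE_sum (q : ℝ) (n K : ℕ) (h : n+1 ≤ K) :
    RRE q n = (∑ k ∈ Finset.range K, tp q n k) + ∑ j ∈ Finset.range K, tm q n j := by
  rw [RRE, sum_tp_ext q n K h, sum_tm_ext q n K h]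

lemma RRE_rec (q : ℝ) (hq : |q| < 1) (n : ℕ) :
    RRE q (n+2) = RRE q (n+1) + q^(n+2) * RRE q n := by
  rcases Nat.even_or_odd n with hpar | hpar
  · -- n even : use ranges of odd length 2(n+3)+1
    have hp : n % 2 = 0 := Nat.even_iff.mp hpar
    set K := 2*(n+3)+1 with hK
    have key : (∑ k ∈ Finset.range K, SpT q n k) + ∑ j ∈ Finset.range K, SmT q n j = 0 := by
      rw [hK, sum_range_two_mul_add_one, sum_range_two_mul_add_one]
      have h1 : ∑ m ∈ Finset.range (n+3), (SpT q n (2*m+1) + SpT q n (2*m+2)) = 0 := by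
        apply Finset.sum_eq_zero
        intro m _
        have := pairP q hq n (2*m+1) (by omega)
        linarith
      have h2 : ∑ m ∈ Finset.range (n+3), (SmT q n (2*m+1) + SmT q n (2*m+2)) = 0 := by
        apply Finset.sum_eq_zero
        intro m _
        have := pairM q hq n (2*m+1) (by omega)
        linarith
      have h3 := pairPM q hq n hp
      rw [h1, h2]
      linarith
    have e2 := RRE_sum q (n+2) K (by omega)
    have e1 := RRE_sum q (n+1) K (by omega)
    have e0 := RRE_sum q n K (by omega)
    have expandP : ∑ k ∈ Finset.range K, SpT q n k
        = (∑ k ∈ Finset.range K, tp q (n+2) k) - (∑ k ∈ Finset.range K, tp q (n+1) k)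
          - q^(n+2) * ∑ k ∈ Finset.range K, tp q n k := by
      simp only [SpT]
      rw [Finset.sum_sub_distrib, Finset.sum_sub_distrib, ← Finset.mul_sum]
    have expandM : ∑ j ∈ Finset.range K, SmT q n j
        = (∑ j ∈ Finset.range K, tm q (n+2) j) - (∑ j ∈ Finset.range K, tm q (n+1) j)
          - q^(n+2) * ∑ j ∈ Finset.range K, tm q n j := by
      simp only [SmT]
      rw [Finset.sum_sub_distrib, Finset.sum_sub_distrib, ← Finset.mul_sum]
    rw [e2, e1, e0]
    rw [expandP, expandM] at key
    linear_combination key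
  · have hp : n % 2 = 1 := Nat.odd_iff.mp hpar
    set K := 2*(n+3) with hK
    have key : (∑ k ∈ Finset.range K, SpT q n k) + ∑ j ∈ Finset.range K, SmT q n j = 0 := by
      rw [hK, sum_range_two_mul, sum_range_two_mul]
      have h1 : ∑ m ∈ Finset.range (n+3), (SpT q n (2*m) + SpT q n (2*m+1)) = 0 := by
        apply Finset.sum_eq_zero
        intro m _
        have := pairP q hq n (2*m) (by omega)
        linarith
      have h2 : ∑ m ∈ Finset.range (n+3), (SmT q n (2*m) + SmT q n (2*m+1)) = 0 := by
        apply Finset.sum_eq_zero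
        intro m _
        exact pairM q hq n (2*m) (by omega)
      rw [h1, h2]
      ring
    have e2 := RRE_sum q (n+2) K (by omega)
    have e1 := RRE_sum q (n+1) K (by omega)
    have e0 := RRE_sum q n K (by omega)
    have expandP : ∑ k ∈ Finset.range K, SpT q n k
        = (∑ k ∈ Finset.range K, tp q (n+2) k) - (∑ k ∈ Finset.range K, tp q (n+1) k)
          - q^(n+2) * ∑ k ∈ Finset.range K, tp q n k := by
      simp only [SpT]
      rw [Finset.sum_sub_distrib, Finset.sum_sub_distrib, ← Finset.mul_sum]
    have expandM : ∑ j ∈ Finset.range K, SmT q n j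
        = (∑ j ∈ Finset.range K, tm q (n+2) j) - (∑ j ∈ Finset.range K, tm q (n+1) j)
          - q^(n+2) * ∑ j ∈ Finset.range K, tm q n j := by
      simp only [SmT]
      rw [Finset.sum_sub_distrib, Finset.sum_sub_distrib, ← Finset.mul_sum]
    rw [e2, e1, e0]
    rw [expandP, expandM] at key
    linear_combination key

lemma RRD_eq_RRE (q : ℝ) (hq : |q| < 1) (n : ℕ) : RRD q n = RRE q n := by
  have base0 : RRD q 0 = RRE q 0 := by
    rw [RRD, RRE]
    simp [Finset.sum_range_succ, tp, tm, gb_zero q hq, gb_of_gt q (show 1 < 2 by omega)]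
  have base1 : RRD q 1 = RRE q 1 := by
    rw [RRD, RRE]
    simp [Finset.sum_range_succ, tp, tm, gb_zero q hq, gb_of_gt q (show 0 < 1 by omega),
      gb_of_gt q (show 2 < 3 by omega), gb_of_gt q (show 2 < 5 by omega),
      gb_of_gt q (show 2 < 8 by omega)]
  have main : ∀ n, RRD q n = RRE q n ∧ RRD q (n+1) = RRE q (n+1) := by
    intro n
    induction n with
    | zero => exact ⟨base0, base1⟩
    | succ m ih =>
        refine ⟨ih.2, ?_⟩
        rw [show m+1+1 = m+2 from rfl, RRD_rec q hq m, RRE_rec q hq m, ih.1, ih.2]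
  exact (main n).1

-- ===== analytic part =====

lemma one_sub_pow_pos' (q : ℝ) (hq : |q| < 1) (m : ℕ) : 0 < 1 - q^(m+1) := by
  have h : q^(m+1) ≤ |q^(m+1)| := le_abs_self _
  have h2 : |q^(m+1)| < 1 := by
    rw [abs_pow]
    calc |q|^(m+1) ≤ |q|^1 := pow_le_pow_of_le_one (abs_nonneg q) hq.le (by omega)
      _ < 1 := by simpa using hq
  linarith

lemma summable_geom_abs (q : ℝ) (hq : |q| < 1) : Summable (fun j : ℕ => |q|^(j+1)) := by
  have h := summable_geometric_of_lt_one (abs_nonneg q) hq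
  exact (h.mul_left |q|).congr fun j => by rw [pow_succ]; ring

lemma summable_log_qPoch (q : ℝ) (hq : |q| < 1) :
    Summable (fun j : ℕ => Real.log (1 - q^(j+1))) := by
  apply Summable.of_norm_bounded (g := fun j => |q|^(j+1) / (1 - |q|))
    ((summable_geom_abs q hq).div_const _)
  intro j
  have hy : 0 < 1 - q^(j+1) := one_sub_pow_pos' q hq j
  have habs : |q^(j+1)| ≤ |q|^(j+1) := by rw [abs_pow]
  have hr1 : 0 < 1 - |q| := by
    have := abs_nonneg q; linarith
  have hylb : 1 - |q| ≤ 1 - q^(j+1) := by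
    have : q^(j+1) ≤ |q^(j+1)| := le_abs_self _
    have h2 : |q|^(j+1) ≤ |q| := by
      calc |q|^(j+1) ≤ |q|^1 := pow_le_pow_of_le_one (abs_nonneg q) hq.le (by omega)
        _ = |q| := pow_one _
    nlinarith [abs_pow q (j+1)]
  rw [Real.norm_eq_abs, abs_le]
  constructor
  · -- lower bound : -(r^{j+1}/(1-r)) ≤ log y
    have h1 : Real.log (1 - q^(j+1)) = - Real.log (1 - q^(j+1))⁻¹ := by
      rw [Real.log_inv]; ring
    have h2 : Real.log (1 - q^(j+1))⁻¹ ≤ (1 - q^(j+1))⁻¹ - 1 :=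
      Real.log_le_sub_one_of_pos (by positivity)
    have h3 : (1 - q^(j+1))⁻¹ - 1 = q^(j+1) / (1 - q^(j+1)) := by
      field_simp; ring
    have h4 : q^(j+1) / (1 - q^(j+1)) ≤ |q|^(j+1) / (1 - |q|) := by
      apply div_le_div₀ (by positivity) _ hr1 hylb
      calc q^(j+1) ≤ |q^(j+1)| := le_abs_self _
        _ ≤ |q|^(j+1) := habs
    rw [h1]
    linarith
  · have h2 : Real.log (1 - q^(j+1)) ≤ (1 - q^(j+1)) - 1 := Real.log_le_sub_one_of_pos hy
    have h3 : (1 - q^(j+1)) - 1 = -q^(j+1) := by ring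
    have h4 : -q^(j+1) ≤ |q|^(j+1) := by
      calc -q^(j+1) ≤ |q^(j+1)| := neg_le_abs _
        _ ≤ |q|^(j+1) := habs
    have h5 : |q|^(j+1) ≤ |q|^(j+1) / (1 - |q|) := by
      rw [le_div_iff₀ hr1]
      nlinarith [pow_nonneg (abs_nonneg q) (j+1), abs_nonneg q]
    linarith

lemma qPoch_eq_exp (q : ℝ) (hq : |q| < 1) (n : ℕ) :
    qPoch q n = Real.exp (∑ j ∈ Finset.range n, Real.log (1 - q^(j+1))) := by
  rw [Real.exp_sum, qPoch]
  exact Finset.prod_congr rfl fun j _ => (Real.exp_log (one_sub_pow_pos' q hq j)).symm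

lemma hasProd_qPoch (q : ℝ) (hq : |q| < 1) :
    HasProd (fun j : ℕ => 1 - q^(j+1))
      (Real.exp (∑' j : ℕ, Real.log (1 - q^(j+1)))) := by
  have hs := (summable_log_qPoch q hq).hasSum
  have h := hs.rexp
  refine h.congr_fun fun j => ?_
  exact (Real.exp_log (one_sub_pow_pos' q hq j)).symm

lemma tendsto_qPoch (q : ℝ) (hq : |q| < 1) :
    Filter.Tendsto (qPoch q) Filter.atTop
      (nhds (Real.exp (∑' j : ℕ, Real.log (1 - q^(j+1))))) := by
  have hs := (summable_log_qPoch q hq).hasSum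
  have h1 := hs.tendsto_sum_nat
  have h2 := (Real.continuous_exp.tendsto _).comp h1
  refine h2.congr fun n => ?_
  exact (qPoch_eq_exp q hq n).symm

lemma qPoch_abs_pos (q : ℝ) (hq : |q| < 1) (n : ℕ) : 0 < qPoch |q| n := by
  rw [qPoch]
  apply Finset.prod_pos
  intro j _
  exact one_sub_pow_pos' |q| (by rwa [abs_abs]) j

lemma qPoch_abs_antitone (q : ℝ) (hq : |q| < 1) {m n : ℕ} (h : m ≤ n) :
    qPoch |q| n ≤ qPoch |q| m := by
  induction n with
  | zero => simp_all
  | succ k ih =>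
    rcases Nat.lt_or_ge m (k+1) with h2 | h2
    · have h3 := ih (by omega)
      rw [qPoch_succ]
      have hk := qPoch_abs_pos q hq k
      have h4 : 1 - |q|^(k+1) ≤ 1 := by
        have : (0:ℝ) ≤ |q|^(k+1) := by positivity
        linarith
      nlinarith [one_sub_pow_pos' |q| (by rwa [abs_abs]) k]
    · have : m = k+1 := by omega
      subst this
      exact le_refl _

/-- uniform positive lower bound for `|qPoch q n|`. -/
lemma qPoch_lower (q : ℝ) (hq : |q| < 1) (n : ℕ) :
    Real.exp (∑' j : ℕ, Real.log (1 - |q|^(j+1))) ≤ qPoch |q| n := by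
  have habs : |(|q|)| < 1 := by rwa [abs_abs]
  have ht := tendsto_qPoch |q| habs
  apply le_of_tendsto ht
  filter_upwards [Filter.eventually_ge_atTop n] with m hm
  exact qPoch_abs_antitone q hq hm

lemma abs_qPoch_ge (q : ℝ) (hq : |q| < 1) (n : ℕ) : qPoch |q| n ≤ |qPoch q n| := by
  rw [qPoch, qPoch, Finset.abs_prod]
  apply Finset.prod_le_prod
  · intro j _
    exact (one_sub_pow_pos' |q| (by rwa [abs_abs]) j).le
  · intro j _
    calc 1 - |q|^(j+1) = |(1:ℝ)| - |q^(j+1)| := by rw [abs_one, abs_pow]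
      _ ≤ |1 - q^(j+1)| := abs_sub_abs_le_abs_sub _ _
    
lemma abs_qPoch_le (q : ℝ) (hq : |q| < 1) (n : ℕ) :
    |qPoch q n| ≤ Real.exp (∑' j : ℕ, |q|^(j+1)) := by
  rw [qPoch, Finset.abs_prod]
  calc ∏ j ∈ Finset.range n, |1 - q^(j+1)|
      ≤ ∏ j ∈ Finset.range n, Real.exp (|q|^(j+1)) := by
        apply Finset.prod_le_prod
        · intro j _; exact abs_nonneg _
        · intro j _
          have h1 : |1 - q^(j+1)| ≤ 1 + |q|^(j+1) := by
            calc |1 - q^(j+1)| ≤ |(1:ℝ)| + |q^(j+1)| := abs_sub _ _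
              _ = 1 + |q|^(j+1) := by rw [abs_one, abs_pow]
          calc |1 - q^(j+1)| ≤ 1 + |q|^(j+1) := h1
            _ ≤ Real.exp (|q|^(j+1)) := Real.add_one_le_exp _ |>.trans_eq' (by ring)
    _ = Real.exp (∑ j ∈ Finset.range n, |q|^(j+1)) := (Real.exp_sum _ _).symm
    _ ≤ Real.exp (∑' j : ℕ, |q|^(j+1)) := by
        apply Real.exp_le_exp.mpr
        exact Summable.sum_le_tsum _ (fun j _ => by positivity) (summable_geom_abs q hq)

lemma gb_bound (q : ℝ) (hq : |q| < 1) (n k : ℕ) :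
    |gb q n k| ≤ Real.exp (∑' j : ℕ, |q|^(j+1))
      / (Real.exp (∑' j : ℕ, Real.log (1 - |q|^(j+1)))
          * Real.exp (∑' j : ℕ, Real.log (1 - |q|^(j+1)))) := by
  set B := Real.exp (∑' j : ℕ, |q|^(j+1)) with hB
  set c := Real.exp (∑' j : ℕ, Real.log (1 - |q|^(j+1))) with hc
  have hcpos : 0 < c := Real.exp_pos _
  have hBpos : 0 < B := Real.exp_pos _
  rw [gb]
  split_ifs with h
  · rw [abs_div, abs_mul]
    have hnum : |qPoch q n| ≤ B := abs_qPoch_le q hq n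
    have hd1 : c ≤ |qPoch q k| := le_trans (qPoch_lower q hq k) (abs_qPoch_ge q hq k)
    have hd2 : c ≤ |qPoch q (n-k)| := le_trans (qPoch_lower q hq (n-k)) (abs_qPoch_ge q hq (n-k))
    apply div_le_div₀ hBpos.le hnum (by positivity)
    exact mul_le_mul hd1 hd2 hcpos.le (abs_nonneg _)
  · simp only [abs_zero]
    positivity

lemma tendsto_nat_sub_div (c d : ℕ) (hd : 0 < d) :
    Filter.Tendsto (fun n : ℕ => (n - c)/d) Filter.atTop Filter.atTop := by
  rw [Filter.tendsto_atTop_atTop]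
  intro b
  refine ⟨d*b + c, fun a ha => ?_⟩
  have hcomm : b*d = d*b := Nat.mul_comm b d
  exact (Nat.le_div_iff_mul_le hd).mpr (by omega)

lemma tendsto_RRD (q : ℝ) (hq : |q| < 1) :
    Filter.Tendsto (RRD q) Filter.atTop
      (nhds (∑' l : ℕ, q^(l^2+l) * (qPoch q l)⁻¹)) := by
  classical
  set L := Real.exp (∑' j : ℕ, Real.log (1 - q^(j+1))) with hLdef
  have hLpos : 0 < L := Real.exp_pos _
  set C := Real.exp (∑' j : ℕ, |q|^(j+1))
      / (Real.exp (∑' j : ℕ, Real.log (1 - |q|^(j+1)))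
          * Real.exp (∑' j : ℕ, Real.log (1 - |q|^(j+1)))) with hCdef
  have hC0 : 0 ≤ C := by
    rw [hCdef]; positivity
  have hRRD : ∀ n, RRD q n = ∑' j : ℕ, q^(j^2+j) * gb q (n-j) j := by
    intro n
    rw [RRD]
    refine (tsum_eq_sum ?_).symm
    intro j hj
    simp only [Finset.mem_range] at hj
    have h1 : n - j = 0 := by omega
    rw [h1, gb_of_gt q (show 0 < j from by omega), mul_zero]
  have key : Filter.Tendsto (fun n => ∑' j : ℕ, q^(j^2+j) * gb q (n-j) j) Filter.atTop
      (nhds (∑' l : ℕ, q^(l^2+l) * (qPoch q l)⁻¹)) := by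
    apply tendsto_tsum_of_dominated_convergence (bound := fun j : ℕ => |q|^j * C)
    · exact (summable_geometric_of_lt_one (abs_nonneg q) hq).mul_right C
    · intro j
      have h1 : Filter.Tendsto (fun n : ℕ => qPoch q (n - j)) Filter.atTop (nhds L) :=
        (tendsto_qPoch q hq).comp (tendsto_nat_sub_div j 1 one_pos |>.congr (by simp))
      have h2 : Filter.Tendsto (fun n : ℕ => qPoch q j * qPoch q (n - j - j))
          Filter.atTop (nhds (qPoch q j * L)) := by
        apply Filter.Tendsto.const_mul
        refine (tendsto_qPoch q hq).comp ?_
        have := tendsto_nat_sub_div (j + j) 1 one_pos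
        refine this.congr fun n => ?_
        omega
      have hne : qPoch q j * L ≠ 0 := mul_ne_zero (qPoch_ne q hq j) hLpos.ne'
      have h3 := h1.div h2 hne
      have h4 : Filter.Tendsto (fun n : ℕ => gb q (n-j) j) Filter.atTop
          (nhds (L / (qPoch q j * L))) := by
        refine h3.congr' ?_
        filter_upwards [Filter.eventually_ge_atTop (2*j)] with n hn
        rw [gb, if_pos (by omega)]
        rfl
      have h5 : L / (qPoch q j * L) = (qPoch q j)⁻¹ := by
        rw [mul_comm, ← div_div, div_self hLpos.ne', one_div]
      rw [h5] at h4
      exact h4.const_mul _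
    · apply Filter.Eventually.of_forall
      intro n j
      rw [Real.norm_eq_abs, abs_mul, abs_pow]
      have h1 : |gb q (n-j) j| ≤ C := gb_bound q hq (n-j) j
      have h2 : |q|^(j^2+j) ≤ |q|^j :=
        pow_le_pow_of_le_one (abs_nonneg q) hq.le (by nlinarith)
      calc |q|^(j^2+j) * |gb q (n-j) j| ≤ |q|^(j^2+j) * C := by
            apply mul_le_mul_of_nonneg_left h1 (by positivity)
        _ ≤ |q|^j * C := mul_le_mul_of_nonneg_right h2 hC0
  exact key.congr fun n => (hRRD n).symm

lemma tendsto_RRE (q : ℝ) (hq : |q| < 1) :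
    Filter.Tendsto (RRE q) Filter.atTop
      (nhds ((∑' k : ℕ, (-1:ℝ)^k * q^(k*(5*k+3)/2)
                * (Real.exp (∑' j : ℕ, Real.log (1 - q^(j+1))))⁻¹)
        + ∑' j : ℕ, (-1:ℝ)^(j+1) * q^((j+1)*(5*j+2)/2)
                * (Real.exp (∑' i : ℕ, Real.log (1 - q^(i+1))))⁻¹)) := by
  classical
  set L := Real.exp (∑' j : ℕ, Real.log (1 - q^(j+1))) with hLdef
  have hLpos : 0 < L := Real.exp_pos _
  set C := Real.exp (∑' j : ℕ, |q|^(j+1))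
      / (Real.exp (∑' j : ℕ, Real.log (1 - |q|^(j+1)))
          * Real.exp (∑' j : ℕ, Real.log (1 - |q|^(j+1)))) with hCdef
  have hC0 : 0 ≤ C := by rw [hCdef]; positivity
  have hLL : L / (L * L) = L⁻¹ := by
    rw [← div_div, div_self hLpos.ne', one_div]
  have hRRE : ∀ n, RRE q n
      = (∑' k : ℕ, tp q n k) + ∑' j : ℕ, tm q n j := by
    intro n
    rw [RRE]
    congr 1
    · refine (tsum_eq_sum ?_).symm
      intro k hk
      simp only [Finset.mem_range] at hk
      exact tp_eq_zero q (by omega)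
    · refine (tsum_eq_sum ?_).symm
      intro j hj
      simp only [Finset.mem_range] at hj
      exact tm_eq_zero q (by omega)
  have keyP : Filter.Tendsto (fun n => ∑' k : ℕ, tp q n k) Filter.atTop
      (nhds (∑' k : ℕ, (-1:ℝ)^k * q^(k*(5*k+3)/2) * L⁻¹)) := by
    apply tendsto_tsum_of_dominated_convergence (bound := fun k : ℕ => |q|^k * C)
    · exact (summable_geometric_of_lt_one (abs_nonneg q) hq).mul_right C
    · intro k
      have h1 : Filter.Tendsto (fun n : ℕ => qPoch q (n+1)) Filter.atTop (nhds L) :=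
        (tendsto_qPoch q hq).comp (Filter.tendsto_add_atTop_nat 1)
      have hm : Filter.Tendsto (fun n : ℕ => (n - 5*k)/2) Filter.atTop Filter.atTop :=
        tendsto_nat_sub_div (5*k) 2 (by norm_num)
      have hg : Filter.Tendsto (fun n : ℕ => (n+1) - (n - 5*k)/2) Filter.atTop Filter.atTop := by
        rw [Filter.tendsto_atTop_atTop]
        intro b
        exact ⟨2*b + 5*k + 2, fun a ha => by omega⟩
      have h2 : Filter.Tendsto (fun n : ℕ => qPoch q ((n-5*k)/2) * qPoch q ((n+1) - (n-5*k)/2))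
          Filter.atTop (nhds (L * L)) :=
        ((tendsto_qPoch q hq).comp hm).mul ((tendsto_qPoch q hq).comp hg)
      have hne : L * L ≠ 0 := mul_ne_zero hLpos.ne' hLpos.ne'
      have h3 := h1.div h2 hne
      have h4 : Filter.Tendsto (fun n : ℕ => gb q (n+1) ((n-5*k)/2)) Filter.atTop
          (nhds (L / (L * L))) := by
        refine h3.congr' ?_
        filter_upwards [Filter.eventually_ge_atTop (5*k)] with n hn
        rw [gb, if_pos (by omega)]
        rfl
      rw [hLL] at h4
      have h5 := h4.const_mul ((-1:ℝ)^k * q^(k*(5*k+3)/2))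
      refine h5.congr' ?_
      filter_upwards [Filter.eventually_ge_atTop (5*k)] with n hn
      rw [tp, if_pos (by omega)]
    · apply Filter.Eventually.of_forall
      intro n k
      rw [Real.norm_eq_abs]
      have hle : |tp q n k| ≤ |q|^(k*(5*k+3)/2) * C := by
        rw [tp]
        split_ifs with h
        · rw [abs_mul, abs_mul, abs_pow, abs_pow, abs_neg, abs_one, one_pow, one_mul]
          exact mul_le_mul_of_nonneg_left (gb_bound q hq _ _) (by positivity)
        · simp only [abs_zero]
          positivity
      have h2 : |q|^(k*(5*k+3)/2) ≤ |q|^k := by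
        apply pow_le_pow_of_le_one (abs_nonneg q) hq.le
        apply (Nat.le_div_iff_mul_le (by norm_num)).mpr
        nlinarith
      calc |tp q n k| ≤ |q|^(k*(5*k+3)/2) * C := hle
        _ ≤ |q|^k * C := mul_le_mul_of_nonneg_right h2 hC0
  have keyM : Filter.Tendsto (fun n => ∑' j : ℕ, tm q n j) Filter.atTop
      (nhds (∑' j : ℕ, (-1:ℝ)^(j+1) * q^((j+1)*(5*j+2)/2) * L⁻¹)) := by
    apply tendsto_tsum_of_dominated_convergence (bound := fun j : ℕ => |q|^j * C)
    · exact (summable_geometric_of_lt_one (abs_nonneg q) hq).mul_right C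
    · intro j
      have h1 : Filter.Tendsto (fun n : ℕ => qPoch q (n+1)) Filter.atTop (nhds L) :=
        (tendsto_qPoch q hq).comp (Filter.tendsto_add_atTop_nat 1)
      have hm : Filter.Tendsto (fun n : ℕ => (n+5*j+5)/2) Filter.atTop Filter.atTop := by
        rw [Filter.tendsto_atTop_atTop]
        intro b
        exact ⟨2*b, fun a ha => by omega⟩
      have hg : Filter.Tendsto (fun n : ℕ => (n+1) - (n+5*j+5)/2) Filter.atTop Filter.atTop := by
        rw [Filter.tendsto_atTop_atTop]
        intro b
        exact ⟨2*b + 5*j + 5, fun a ha => by omega⟩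
      have h2 : Filter.Tendsto (fun n : ℕ => qPoch q ((n+5*j+5)/2) * qPoch q ((n+1) - (n+5*j+5)/2))
          Filter.atTop (nhds (L * L)) :=
        ((tendsto_qPoch q hq).comp hm).mul ((tendsto_qPoch q hq).comp hg)
      have hne : L * L ≠ 0 := mul_ne_zero hLpos.ne' hLpos.ne'
      have h3 := h1.div h2 hne
      have h4 : Filter.Tendsto (fun n : ℕ => gb q (n+1) ((n+5*j+5)/2)) Filter.atTop
          (nhds (L / (L * L))) := by
        refine h3.congr' ?_
        filter_upwards [Filter.eventually_ge_atTop (5*j+3)] with n hn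
        rw [gb, if_pos (by omega)]
        rfl
      rw [hLL] at h4
      have h5 := h4.const_mul ((-1:ℝ)^(j+1) * q^((j+1)*(5*j+2)/2))
      refine h5.congr' ?_
      apply Filter.Eventually.of_forall
      intro n
      simp only [tm]
    · apply Filter.Eventually.of_forall
      intro n j
      rw [Real.norm_eq_abs]
      have hle : |tm q n j| ≤ |q|^((j+1)*(5*j+2)/2) * C := by
        rw [tm, abs_mul, abs_mul, abs_pow, abs_pow, abs_neg, abs_one, one_pow, one_mul]
        exact mul_le_mul_of_nonneg_left (gb_bound q hq _ _) (by positivity)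
      have h2 : |q|^((j+1)*(5*j+2)/2) ≤ |q|^j := by
        apply pow_le_pow_of_le_one (abs_nonneg q) hq.le
        apply (Nat.le_div_iff_mul_le (by norm_num)).mpr
        nlinarith
      calc |tm q n j| ≤ |q|^((j+1)*(5*j+2)/2) * C := hle
        _ ≤ |q|^j * C := mul_le_mul_of_nonneg_right h2 hC0
  have := keyP.add keyM
  exact this.congr fun n => (hRRE n).symm

lemma neg_one_pow_mod (a b : ℕ) (h : a % 2 = b % 2) : ((-1:ℝ))^a = (-1)^b := by
  rcases Nat.even_or_odd a with ha | ha
  · have ha' : a % 2 = 0 := Nat.even_iff.mp ha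
    have hb : Even b := Nat.even_iff.mpr (by omega)
    rw [ha.neg_one_pow, hb.neg_one_pow]
  · have ha' : a % 2 = 1 := Nat.odd_iff.mp ha
    have hb : Odd b := Nat.odd_iff.mpr (by omega)
    rw [ha.neg_one_pow, hb.neg_one_pow]

lemma sq_mod_two (m : ℕ) : (m*m) % 2 = m % 2 := by
  rcases Nat.even_or_odd m with ⟨t, rfl⟩ | ⟨t, rfl⟩
  · have h : (t+t)*(t+t) = 2*(2*t*t) := by ring
    omega
  · have h : (2*t+1)*(2*t+1) = 2*(2*t*t+2*t)+1 := by ring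
    omega

lemma term1 (q : ℝ) (i : ℕ) :
    (-(q^4))^(i*(i+1)/2) * (-q)^(i*(i-1)/2) = (-1)^i * q^(i*(5*i+3)/2) := by
  match i with
  | 0 => norm_num
  | m+1 =>
    simp only [Nat.add_sub_cancel]
    obtain ⟨s, hs⟩ : ∃ s, m*m = s := ⟨_, rfl⟩
    have hss : s % 2 = m % 2 := hs ▸ sq_mod_two m
    have hp1 : (m+1)*(m+1+1) = s + 3*m + 2 := by rw [← hs]; ring
    have hp2 : (m+1)*m = s + m := by rw [← hs]; ring
    have hp3 : (m+1)*(5*(m+1)+3) = 5*s + 13*m + 8 := by rw [← hs]; ring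
    rw [hp1, hp2, hp3]
    obtain ⟨v, hv⟩ : ∃ v, s + 3*m + 2 = 2*v := ⟨(s+3*m+2)/2, by omega⟩
    obtain ⟨u, hu⟩ : ∃ u, s + m = 2*u := ⟨(s+m)/2, by omega⟩
    rw [hv, hu, show 5*s + 13*m + 8 = 2*(4*v+u) from by omega]
    simp only [Nat.mul_div_cancel_left _ (by norm_num : 0 < 2)]
    have hsign : ((-1:ℝ))^v * (-1)^u = (-1)^(m+1) := by
      rw [← pow_add]
      exact neg_one_pow_mod (v+u) (m+1) (by omega)
    have hsplit : (-(q^4))^v * (-q)^u = ((-1:ℝ)^v * (-1)^u) * (q^(4*v) * q^u) := by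
      rw [neg_pow, neg_pow, ← pow_mul]
      ring
    rw [hsplit, hsign, ← pow_add]

lemma term2 (q : ℝ) (i : ℕ) :
    (-(q^4))^((i+1)*i/2) * (-q)^((i+1)*(i+2)/2) = (-1)^(i+1) * q^((i+1)*(5*i+2)/2) := by
  obtain ⟨s, hs⟩ : ∃ s, i*i = s := ⟨_, rfl⟩
  have hss : s % 2 = i % 2 := hs ▸ sq_mod_two i
  have hp1 : (i+1)*i = s + i := by rw [← hs]; ring
  have hp2 : (i+1)*(i+2) = s + 3*i + 2 := by rw [← hs]; ring
  have hp3 : (i+1)*(5*i+2) = 5*s + 7*i + 2 := by rw [← hs]; ring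
  rw [hp1, hp2, hp3]
  obtain ⟨u, hu⟩ : ∃ u, s + i = 2*u := ⟨(s+i)/2, by omega⟩
  obtain ⟨v, hv⟩ : ∃ v, s + 3*i + 2 = 2*v := ⟨(s+3*i+2)/2, by omega⟩
  rw [hu, hv, show 5*s + 7*i + 2 = 2*(4*u+v) from by omega]
  simp only [Nat.mul_div_cancel_left _ (by norm_num : 0 < 2)]
  have hsign : ((-1:ℝ))^u * (-1)^v = (-1)^(i+1) := by
    rw [← pow_add]
    exact neg_one_pow_mod (u+v) (i+1) (by omega)
  have hsplit : (-(q^4))^u * (-q)^v = ((-1:ℝ)^u * (-1)^v) * (q^(4*u) * q^v) := by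
    rw [neg_pow, neg_pow, ← pow_mul]
    ring
  rw [hsplit, hsign, ← pow_add]

noncomputable def ramTheta (a b : ℝ) : ℝ :=
  (∑' i : ℕ, a ^ (i * (i + 1) / 2) * b ^ (i * (i - 1) / 2)) +
    ∑' i : ℕ, a ^ ((i + 1) * i / 2) * b ^ ((i + 1) * (i + 2) / 2)

theorem rogers_ramanujan_type_k_two (q : ℝ) (hq : |q| < 1) :
    ramTheta (-(q ^ 4)) (-q)
      = (∏' j : ℕ, (1 - q ^ (j + 1))) * ∑' l : ℕ, q ^ (l ^ 2 + l) / qPoch q l := by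
  classical
  set L := Real.exp (∑' j : ℕ, Real.log (1 - q^(j+1))) with hLdef
  have hLpos : 0 < L := Real.exp_pos _
  have hprod : (∏' j : ℕ, (1 - q ^ (j + 1))) = L := (hasProd_qPoch q hq).tprod_eq
  have hD := tendsto_RRD q hq
  have hE := tendsto_RRE q hq
  have hDE : ∀ n, RRD q n = RRE q n := RRD_eq_RRE q hq
  have hlim : (∑' l : ℕ, q^(l^2+l) * (qPoch q l)⁻¹)
      = (∑' k : ℕ, (-1:ℝ)^k * q^(k*(5*k+3)/2) * L⁻¹)
        + ∑' j : ℕ, (-1:ℝ)^(j+1) * q^((j+1)*(5*j+2)/2) * L⁻¹ := by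
    refine tendsto_nhds_unique ?_ hE
    exact hD.congr hDE
  have hA : (∑' i : ℕ, (-(q^4)) ^ (i * (i + 1) / 2) * (-q) ^ (i * (i - 1) / 2))
      = ∑' k : ℕ, (-1:ℝ)^k * q^(k*(5*k+3)/2) := tsum_congr fun i => term1 q i
  have hB : (∑' i : ℕ, (-(q^4)) ^ ((i + 1) * i / 2) * (-q) ^ ((i + 1) * (i + 2) / 2))
      = ∑' j : ℕ, (-1:ℝ)^(j+1) * q^((j+1)*(5*j+2)/2) := tsum_congr fun i => term2 q i
  have hdiv : (∑' l : ℕ, q ^ (l ^ 2 + l) / qPoch q l)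
      = ∑' l : ℕ, q^(l^2+l) * (qPoch q l)⁻¹ := tsum_congr fun l => div_eq_mul_inv _ _
  have hmulA : (∑' k : ℕ, (-1:ℝ)^k * q^(k*(5*k+3)/2) * L⁻¹)
      = (∑' k : ℕ, (-1:ℝ)^k * q^(k*(5*k+3)/2)) * L⁻¹ := tsum_mul_right
  have hmulB : (∑' j : ℕ, (-1:ℝ)^(j+1) * q^((j+1)*(5*j+2)/2) * L⁻¹)
      = (∑' j : ℕ, (-1:ℝ)^(j+1) * q^((j+1)*(5*j+2)/2)) * L⁻¹ := tsum_mul_right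
  rw [ramTheta, hA, hB, hprod, hdiv, hlim, hmulA, hmulB]
  field_simp
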